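/- Let X = {[s_1,t_1], ..., [s_k,t_k]} be a finite set of closed integer intervals and let X' = {[s'_1,t_1], ..., [s'_k,t_k]} be an associated set of intervals such that for each 1 ≤ i ≤ k, s_i ≤ s'_i ≤ t_i and |[s'_i,t_i]| ≥ λ·|[s_i,t_i]|, where 0 ≤ λ ≤ 1. Then the number of distinct integers in the union of the intervals of X' is at least λ times the number of distinct integers in the union of the intervals of X. -/

import Mathlib

open Finset

section IntervalShrinkAux

variable {k : ℕ} (s t : Fin k → ℤ)

/-- Priority key: intervals with larger `t`, then smaller `s`, then smaller index
have larger key (higher priority). -/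
def ikey (i : Fin k) : ℤ ×ₗ (ℤ ×ₗ ℤ) :=
  toLex (t i, toLex (-(s i), -(i : ℤ)))

lemma ikey_lt_t {i j : Fin k} (h : ikey s t i < ikey s t j) : t i ≤ t j := by
  rw [ikey, ikey, Prod.Lex.lt_iff] at h
  rcases h with h | ⟨h, _⟩
  · exact le_of_lt h
  · exact le_of_eq h

lemma t_lt_ikey {i j : Fin k} (h : t i < t j) : ikey s t i < ikey s t j := by
  rw [ikey, ikey, Prod.Lex.lt_iff]
  exact Or.inl h

lemma ikey_lt_s {i j : Fin k} (h : ikey s t i < ikey s t j) (he : t i = t j) :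
    s j ≤ s i := by
  rw [ikey, ikey, Prod.Lex.lt_iff] at h
  rcases h with h | ⟨_, h2⟩
  · exact absurd he (ne_of_lt h)
  · rw [Prod.Lex.lt_iff] at h2
    rcases h2 with h2 | ⟨h2, _⟩
    · simp only [ofLex_toLex] at h2; linarith
    · exact le_of_eq (neg_inj.mp h2).symm

lemma ikey_inj {i j : Fin k} (h : ikey s t i = ikey s t j) : i = j := by
  rw [ikey, ikey] at h
  have h' := toLex.injective h
  have h2 := congrArg Prod.snd h'
  simp only at h2
  have h3 := congrArg Prod.snd (toLex.injective h2)
  simp only [neg_inj, Int.natCast_inj] at h3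
  exact Fin.ext (by exact_mod_cast h3)

set_option maxHeartbeats 1000000 in
/-- Right endpoint of the piece of `[s i, t i]` not covered by higher-priority intervals. -/
def iE (i : Fin k) : ℤ :=
  ((insert (t i) ((Finset.univ.filter (fun j => ikey s t i < ikey s t j)).image
    (fun j => s j - 1)))).min' (Finset.insert_nonempty _ _)

set_option maxHeartbeats 1000000 in
lemma iE_le_t (i : Fin k) : iE s t i ≤ t i :=
  Finset.min'_le _ _ (Finset.mem_insert_self _ _)

set_option maxHeartbeats 1000000 in
lemma iE_le {i j : Fin k} (h : ikey s t i < ikey s t j) : iE s t i ≤ s j - 1 := by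
  apply Finset.min'_le
  apply Finset.mem_insert_of_mem
  apply Finset.mem_image_of_mem
  simp only [Finset.mem_filter, Finset.mem_univ, true_and]
  exact h

set_option maxHeartbeats 1000000 in
lemma le_iE {i : Fin k} {x : ℤ} (hx : x ≤ t i)
    (h : ∀ j, ikey s t i < ikey s t j → x ≤ s j - 1) : x ≤ iE s t i := by
  apply Finset.le_min'
  intro y hy
  rcases Finset.mem_insert.1 hy with rfl | hy
  · exact hx
  · obtain ⟨j, hj, rfl⟩ := Finset.mem_image.1 hy
    exact h j (Finset.mem_filter.1 hj).2

end IntervalShrinkAux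

set_option maxHeartbeats 1000000 in
/-- Interval shrinking lemma: if each interval `[s'_i, t_i]` retains a `λ`-fraction
of the length of `[s_i, t_i]`, then the union retains a `λ`-fraction of the union. -/
theorem interval_shrinking (k : ℕ) (s t s' : Fin k → ℤ) (lam : ℝ)
    (hlam0 : 0 ≤ lam) (hlam1 : lam ≤ 1)
    (hst : ∀ i, s i ≤ t i)
    (hs'l : ∀ i, s i ≤ s' i) (hs'r : ∀ i, s' i ≤ t i)
    (hlen : ∀ i, ((t i - s' i + 1 : ℤ) : ℝ) ≥ lam * ((t i - s i + 1 : ℤ) : ℝ)) :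
    ((Finset.univ.biUnion (fun i => Finset.Icc (s' i) (t i))).card : ℝ)
      ≥ lam * ((Finset.univ.biUnion (fun i => Finset.Icc (s i) (t i))).card : ℝ) := by
  classical
  set E : Fin k → ℤ := iE s t with hE
  -- the set of indices with a nonempty piece
  set S : Finset (Fin k) := Finset.univ.filter (fun i => s i ≤ E i) with hS
  -- distinct members of S have distinct t
  have hd : ∀ i ∈ S, ∀ j ∈ S, i ≠ j → t i ≠ t j := by
    have claim : ∀ a b : Fin k, a ∈ S → b ∈ S → ikey s t a < ikey s t b →
        t a = t b → False := by
      intro a b ha hb hlt he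
      have h1 : s b ≤ s a := ikey_lt_s s t hlt he
      have h2 : E a ≤ s b - 1 := iE_le s t hlt
      have h3 : s a ≤ E a := (Finset.mem_filter.1 ha).2
      omega
    intro i hi j hj hne heq
    have hkne : ikey s t i ≠ ikey s t j := fun h => hne (ikey_inj s t h)
    rcases lt_or_gt_of_ne hkne with h | h
    · exact claim i j hi hj h heq
    · exact claim j i hj hi h heq.symm
  -- the "gap" property
  have hg : ∀ i ∈ S, ∀ j ∈ S, t i < t j → E i < s j := by
    intro i _ j _ hlt
    have h2 : E i ≤ s j - 1 := iE_le s t (t_lt_ikey s t hlt)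
    omega
  have hEt : ∀ i, E i ≤ t i := fun i => iE_le_t s t i
  -- main induction on the chain of pieces
  have main : ∀ (n : ℕ) (T : Finset (Fin k)), T.card = n → T ⊆ S →
      ∀ i₀ ∈ T, (∀ j ∈ T, t j ≤ t i₀) →
      lam * ((∑ i ∈ T, ((E i - s i + 1 : ℤ) : ℝ)) + ((t i₀ - E i₀ : ℤ) : ℝ))
        ≤ ((T.biUnion (fun i => Finset.Icc (s' i) (t i))).card : ℝ) := by
    intro n
    induction n with
    | zero =>
      intro T hcard _ i₀ hi₀ _
      exact absurd (Finset.card_eq_zero.1 hcard ▸ hi₀) (Finset.notMem_empty i₀)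
    | succ n ih =>
      intro T hcard hTS i₀ hi₀ hmax
      set T' : Finset (Fin k) := T.erase i₀ with hT'
      have hcard' : T'.card = n := by
        rw [hT', Finset.card_erase_of_mem hi₀, hcard]; rfl
      have hsum : (∑ i ∈ T, ((E i - s i + 1 : ℤ) : ℝ))
          = (∑ i ∈ T', ((E i - s i + 1 : ℤ) : ℝ)) + ((E i₀ - s i₀ + 1 : ℤ) : ℝ) :=
        (Finset.sum_erase_add T _ hi₀).symm
      rcases T'.eq_empty_or_nonempty with hT'e | hT'ne
      · -- single interval
        have hTsing : T = {i₀} := by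
          apply Finset.eq_singleton_iff_unique_mem.2
          refine ⟨hi₀, fun j hj => ?_⟩
          by_contra hne
          exact absurd (Finset.mem_erase.2 ⟨hne, hj⟩) (by rw [← hT', hT'e]; simp)
        subst hTsing
        rw [Finset.singleton_biUnion, Finset.sum_singleton]
        have hnn : (0:ℤ) ≤ t i₀ + 1 - s' i₀ := by linarith [hs'r i₀]
        have hc : (((Finset.Icc (s' i₀) (t i₀)).card : ℕ) : ℝ) = ((t i₀ + 1 - s' i₀ : ℤ) : ℝ) := by
          rw [Int.card_Icc]
          exact_mod_cast congrArg (fun z : ℤ => (z : ℝ)) (Int.toNat_of_nonneg hnn)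
        rw [hc]
        have h1 := hlen i₀
        push_cast at h1 ⊢
        nlinarith [h1]
      · -- at least two pieces
        obtain ⟨i₁, hi₁, hmax₁⟩ := T'.exists_max_image t hT'ne
        have hi₁T : i₁ ∈ T := Finset.mem_of_mem_erase hi₁
        have hne₁₀ : i₁ ≠ i₀ := Finset.ne_of_mem_erase hi₁
        have ht10 : t i₁ < t i₀ :=
          lt_of_le_of_ne (hmax i₁ hi₁T) (hd i₁ (hTS hi₁T) i₀ (hTS hi₀) hne₁₀)
        have hE1 : E i₁ < s i₀ := hg i₁ (hTS hi₁T) i₀ (hTS hi₀) ht10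
        set a : ℤ := max (s' i₀) (t i₁ + 1) with ha
        have hat : a ≤ t i₀ := max_le (hs'r i₀) (by omega)
        set piece : Finset ℤ := Finset.Icc a (t i₀) with hpiece
        -- piece is inside the new interval and disjoint from the old union
        have hsub : T'.biUnion (fun i => Finset.Icc (s' i) (t i)) ∪ piece
            ⊆ T.biUnion (fun i => Finset.Icc (s' i) (t i)) := by
          apply Finset.union_subset
          · exact Finset.biUnion_subset_biUnion_of_subset_left _ (Finset.erase_subset _ _)
          · intro x hx
            apply Finset.mem_biUnion.2 ⟨i₀, hi₀, ?_⟩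
            rw [hpiece, Finset.mem_Icc] at hx
            rw [Finset.mem_Icc]
            exact ⟨le_trans (le_max_left _ _) hx.1, hx.2⟩
        have hdisj : Disjoint (T'.biUnion (fun i => Finset.Icc (s' i) (t i))) piece := by
          rw [Finset.disjoint_left]
          intro x hx hx2
          obtain ⟨j, hj, hxj⟩ := Finset.mem_biUnion.1 hx
          rw [Finset.mem_Icc] at hxj
          rw [hpiece, Finset.mem_Icc] at hx2
          have h1 : t j ≤ t i₁ := hmax₁ j hj
          have h2 : t i₁ + 1 ≤ a := le_max_right _ _
          omega
        have hcardle : ((T'.biUnion (fun i => Finset.Icc (s' i) (t i))).card : ℝ)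
            + (piece.card : ℝ)
            ≤ ((T.biUnion (fun i => Finset.Icc (s' i) (t i))).card : ℝ) := by
          have := Finset.card_le_card hsub
          rw [Finset.card_union_of_disjoint hdisj] at this
          exact_mod_cast this
        have hanonneg : (0:ℤ) ≤ t i₀ + 1 - a := by linarith [hat]
        have hpc : (piece.card : ℝ) = ((t i₀ + 1 - a : ℤ) : ℝ) := by
          rw [hpiece, Int.card_Icc]
          exact_mod_cast congrArg (fun z : ℤ => (z : ℝ)) (Int.toNat_of_nonneg hanonneg)
        have hih := ih T' hcard' (le_trans (Finset.erase_subset _ _) hTS) i₁ hi₁ hmax₁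
        -- the key estimate for the new piece
        have hkey : lam * (((E i₀ - s i₀ + 1 : ℤ) : ℝ) + ((t i₀ - E i₀ : ℤ) : ℝ)
              - ((t i₁ - E i₁ : ℤ) : ℝ)) ≤ (piece.card : ℝ) := by
          rw [hpc]
          have hE1t : E i₁ ≤ t i₁ := hEt i₁
          rcases max_choice (s' i₀) (t i₁ + 1) with h | h
          · rw [ha, h]
            have h1 := hlen i₀
            have h2 : (0:ℤ) ≤ t i₁ - E i₁ := by omega
            have h2' : (0:ℝ) ≤ ((t i₁ - E i₁ : ℤ) : ℝ) := by exact_mod_cast h2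
            push_cast at h1 h2' ⊢
            nlinarith
          · rw [ha, h]
            have h2 : ((E i₀ - s i₀ + 1 : ℤ) : ℝ) + ((t i₀ - E i₀ : ℤ) : ℝ)
                - ((t i₁ - E i₁ : ℤ) : ℝ) ≤ ((t i₀ + 1 - (t i₁ + 1) : ℤ) : ℝ) := by
              exact_mod_cast (show (E i₀ - s i₀ + 1) + (t i₀ - E i₀) - (t i₁ - E i₁)
                ≤ t i₀ + 1 - (t i₁ + 1) by omega)
            have h3 : (1 : ℝ) ≤ ((t i₀ + 1 - (t i₁ + 1) : ℤ) : ℝ) := by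
              exact_mod_cast (show (1:ℤ) ≤ t i₀ + 1 - (t i₁ + 1) by omega)
            nlinarith [mul_nonneg hlam0 (sub_nonneg.2 h2),
              mul_nonneg (sub_nonneg.2 hlam1) (le_trans zero_le_one h3)]
        have hring : lam * (((∑ i ∈ T', ((E i - s i + 1 : ℤ) : ℝ))
              + ((E i₀ - s i₀ + 1 : ℤ) : ℝ)) + ((t i₀ - E i₀ : ℤ) : ℝ))
            = lam * ((∑ i ∈ T', ((E i - s i + 1 : ℤ) : ℝ)) + ((t i₁ - E i₁ : ℤ) : ℝ))
              + lam * (((E i₀ - s i₀ + 1 : ℤ) : ℝ) + ((t i₀ - E i₀ : ℤ) : ℝ)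
                - ((t i₁ - E i₁ : ℤ) : ℝ)) := by ring
        rw [hsum, hring]
        linarith [hih, hkey, hcardle]
  -- covering lemma: the original union is covered by the pieces
  have cover : (Finset.univ.biUnion (fun i => Finset.Icc (s i) (t i)))
      ⊆ S.biUnion (fun i => Finset.Icc (s i) (E i)) := by
    intro x hx
    obtain ⟨i₀, _, hxi₀⟩ := Finset.mem_biUnion.1 hx
    set F : Finset (Fin k) := Finset.univ.filter (fun i => x ∈ Finset.Icc (s i) (t i)) with hF
    have hFne : F.Nonempty := ⟨i₀, Finset.mem_filter.2 ⟨Finset.mem_univ _, hxi₀⟩⟩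
    obtain ⟨i, hiF, hmaxk⟩ := F.exists_max_image (ikey s t) hFne
    have hxi := Finset.mem_Icc.1 (Finset.mem_filter.1 hiF).2
    have hxE : x ≤ E i := by
      apply le_iE s t hxi.2
      intro j hkij
      have hjF : j ∉ F := fun hjF => absurd (hmaxk j hjF) (not_le.2 hkij)
      have hxj : x ∉ Finset.Icc (s j) (t j) := by
        intro hmem
        exact hjF (Finset.mem_filter.2 ⟨Finset.mem_univ _, hmem⟩)
      rw [Finset.mem_Icc] at hxj
      have htij : t i ≤ t j := ikey_lt_t s t hkij
      omega
    apply Finset.mem_biUnion.2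
    exact ⟨i, Finset.mem_filter.2 ⟨Finset.mem_univ _, le_trans hxi.1 hxE⟩,
      Finset.mem_Icc.2 ⟨hxi.1, hxE⟩⟩
  -- bound the original union's size by the sum of piece lengths
  have hUb : ((Finset.univ.biUnion (fun i => Finset.Icc (s i) (t i))).card : ℝ)
      ≤ ∑ i ∈ S, ((E i - s i + 1 : ℤ) : ℝ) := by
    have h1 := Finset.card_le_card cover
    have h2 := Finset.card_biUnion_le (s := S) (t := fun i => Finset.Icc (s i) (E i))
    have h3 : ((S.biUnion (fun i => Finset.Icc (s i) (E i))).card : ℝ)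
        ≤ ∑ i ∈ S, ((E i - s i + 1 : ℤ) : ℝ) := by
      calc ((S.biUnion (fun i => Finset.Icc (s i) (E i))).card : ℝ)
          ≤ ((∑ i ∈ S, (Finset.Icc (s i) (E i)).card : ℕ) : ℝ) := by exact_mod_cast h2
        _ = ∑ i ∈ S, ((E i - s i + 1 : ℤ) : ℝ) := by
            push_cast
            apply Finset.sum_congr rfl
            intro i hi
            have hsE : s i ≤ E i := (Finset.mem_filter.1 hi).2
            have hnn : (0:ℤ) ≤ E i + 1 - s i := by omega
            rw [Int.card_Icc]
            have hc := congrArg (fun z : ℤ => (z : ℝ)) (Int.toNat_of_nonneg hnn)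
            push_cast at hc ⊢
            linarith [hc]
    exact le_trans (by exact_mod_cast h1) h3
  rcases S.eq_empty_or_nonempty with hSe | hSne
  · rw [hSe] at hUb
    simp only [Finset.sum_empty] at hUb
    have h0 : ((Finset.univ.biUnion (fun i => Finset.Icc (s i) (t i))).card : ℝ) = 0 :=
      le_antisymm hUb (by positivity)
    rw [h0, mul_zero]
    positivity
  · obtain ⟨i₀, hi₀, hmax⟩ := S.exists_max_image t hSne
    have h1 := main S.card S rfl (le_refl S) i₀ hi₀ hmax
    have h2 : ((S.biUnion (fun i => Finset.Icc (s' i) (t i))).card : ℝ)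
        ≤ ((Finset.univ.biUnion (fun i => Finset.Icc (s' i) (t i))).card : ℝ) := by
      exact_mod_cast Finset.card_le_card
        (Finset.biUnion_subset_biUnion_of_subset_left _ (Finset.subset_univ S))
    have h3 : (0 : ℝ) ≤ ((t i₀ - E i₀ : ℤ) : ℝ) := by
      exact_mod_cast (show (0:ℤ) ≤ t i₀ - E i₀ by have := hEt i₀; omega)
    nlinarith [hUb]
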